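/- Let p = (x, y, z, s) ∈ ℝ^n and consider the derivative Df̃_{(p,0)} : ℝ^n × ℝ → ℝ^{n+k} of f̃ at (p, 0). If x = 0, y = 0 and z = 0, then the kernel of Df̃_{(p,0)} is the two-dimensional span of the vectors (e_z, 0) and (0, 1). If (x, y, z) ≠ (0, 0, 0), then dim ker Df̃_{(p,0)} ≤ 1. (In the cusp normal form, this says that the corank-2 locus of the de-suspension f̃ intersected with the slice ℝ^n × {0} is exactly the Σ^{1,1} locus {x = y = z = 0} of f, the key identity behind the theorem relating the cusp locus of a codimension-k cusp map to the corank-2 locus of its de-suspension.) -/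

import Mathlib

set_option maxHeartbeats 1000000


noncomputable section

open scoped RealInnerProductSpace

/-- Index type for the domain `ℝⁿ`, `n = 2k+2+m`: coordinates `x` (2k of them),
`y`, `z`, and `s` (m of them). -/
abbrev DomIx (k m : ℕ) := (Fin (2*k)) ⊕ Unit ⊕ Unit ⊕ (Fin m)

/-- The domain `ℝⁿ` with its Euclidean inner product. -/
abbrev Dom (k m : ℕ) := EuclideanSpace ℝ (DomIx k m)

/-- Index type for the codomain `ℝ^{n+k}`: coordinates `X` (2k+1), `Y` (k), `Z`, `S` (m). -/
abbrev CodIx (k m : ℕ) := (Fin (2*k+1)) ⊕ (Fin k) ⊕ Unit ⊕ (Fin m)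

/-- The codomain `ℝ^{n+k}` with its Euclidean inner product. -/
abbrev Cod (k m : ℕ) := EuclideanSpace ℝ (CodIx k m)

/-- The `x`-coordinates of a point (0-based: `px p j` is `x_{j+1}`). -/
def px {k m : ℕ} (p : Dom k m) (j : Fin (2*k)) : ℝ := p (Sum.inl j)

/-- The `y`-coordinate of a point. -/
def py {k m : ℕ} (p : Dom k m) : ℝ := p (Sum.inr (Sum.inl ()))

/-- The `z`-coordinate of a point. -/
def pz {k m : ℕ} (p : Dom k m) : ℝ := p (Sum.inr (Sum.inr (Sum.inl ())))

/-- The `s`-coordinates of a point. -/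
def ps {k m : ℕ} (p : Dom k m) (j : Fin m) : ℝ := p (Sum.inr (Sum.inr (Sum.inr j)))

/-- The (0-based) index of the coordinate `x_{2i-1}` (1-based), for `i : Fin k` (0-based). -/
def xo {k : ℕ} (i : Fin k) : Fin (2*k) := ⟨2*i.1, by have := i.isLt; omega⟩

/-- The (0-based) index of the coordinate `x_{2i}` (1-based), for `i : Fin k` (0-based). -/
def xe {k : ℕ} (i : Fin k) : Fin (2*k) := ⟨2*i.1+1, by have := i.isLt; omega⟩

/-- The cusp normal form `f : ℝⁿ → ℝ^{n+k}`:
`X_i = x_i`, `X_{2k+1} = y`, `Y_i = z x_{2i-1} + z² x_{2i}`, `Z = z y + z³`, `S_j = s_j`. -/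
def cuspF (k m : ℕ) (p : Dom k m) : Cod k m :=
  (EuclideanSpace.equiv (CodIx k m) ℝ).symm fun q =>
    match q with
    | Sum.inl j => if h : j.1 < 2*k then px p ⟨j.1, h⟩ else py p
    | Sum.inr (Sum.inl i) => pz p * px p (xo i) + (pz p)^2 * px p (xe i)
    | Sum.inr (Sum.inr (Sum.inl _)) => pz p * py p + (pz p)^3
    | Sum.inr (Sum.inr (Sum.inr j)) => ps p j

/-- The singular set `Σ(f)` of the cusp normal form:
`x_{2i-1} + 2 z x_{2i} = 0` for all `i` and `y + 3z² = 0`. -/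
def SingSet (k m : ℕ) : Set (Dom k m) :=
  {p | (∀ i : Fin k, px p (xo i) + 2 * pz p * px p (xe i) = 0) ∧ py p + 3 * (pz p)^2 = 0}

/-- The standard basis vector `e_z` of the domain. -/
def ez (k m : ℕ) : Dom k m := EuclideanSpace.single (Sum.inr (Sum.inr (Sum.inl ()))) 1


/-- The section `σ : ℝⁿ → ℝ^{n+k}` given coordinatewise (1-based, `1 ≤ i ≤ k`) by
`σ_{X_{2i−1}} = −2z x_{2i}/(1+z²+z⁴)`, `σ_{X_{2i}} = −2z² x_{2i}/(1+z²+z⁴)`,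
`σ_{X_{2k+1}} = −6z²/(1+z²)`, `σ_{Y_i} = 2x_{2i}/(1+z²+z⁴)`, `σ_Z = 6z/(1+z²)`, `σ_{S_j} = 0`. -/
def sigmaF (k m : ℕ) (p : Dom k m) : Cod k m :=
  (EuclideanSpace.equiv (CodIx k m) ℝ).symm fun q =>
    match q with
    | Sum.inl j =>
        if h : j.1 < 2*k then
          if h2 : j.1 % 2 = 0 then
            -- the coordinate `X_{2i-1}` (1-based) with `2i-1 = j.1+1`, so `x_{2i} = x`-coord `j.1+1`
            -2 * pz p * px p ⟨j.1+1, by omega⟩ / (1 + (pz p)^2 + (pz p)^4)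
          else
            -- the coordinate `X_{2i}` (1-based) with `2i = j.1+1`, so `x_{2i} = x`-coord `j.1`
            -2 * (pz p)^2 * px p ⟨j.1, h⟩ / (1 + (pz p)^2 + (pz p)^4)
        else
          -- the coordinate `X_{2k+1}`
          -6 * (pz p)^2 / (1 + (pz p)^2)
    | Sum.inr (Sum.inl i) => 2 * px p (xe i) / (1 + (pz p)^2 + (pz p)^4)
    | Sum.inr (Sum.inr (Sum.inl _)) => 6 * pz p / (1 + (pz p)^2)
    | Sum.inr (Sum.inr (Sum.inr _)) => 0

/-- The de-suspension `f̃ : ℝⁿ × ℝ → ℝ^{n+k}`, `f̃(p, t) = f(p) + t σ(p)`. -/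
def ftilde (k m : ℕ) (q : Dom k m × ℝ) : Cod k m :=
  cuspF k m q.1 + q.2 • sigmaF k m q.1

namespace S6
variable {k m : ℕ}

abbrev zI (k m : ℕ) : DomIx k m := Sum.inr (Sum.inr (Sum.inl ()))
abbrev yI (k m : ℕ) : DomIx k m := Sum.inr (Sum.inl ())

/-- Coordinate functionals of the derivative of `cuspF` at `p`. -/
def coordL (p : Dom k m) : CodIx k m → (Dom k m →L[ℝ] ℝ) := fun q =>
  match q with
  | Sum.inl j =>
      if h : j.1 < 2*k then EuclideanSpace.proj (Sum.inl ⟨j.1, h⟩ : DomIx k m)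
      else EuclideanSpace.proj (yI k m)
  | Sum.inr (Sum.inl i) =>
      pz p • EuclideanSpace.proj (Sum.inl (xo i) : DomIx k m)
      + (pz p)^2 • EuclideanSpace.proj (Sum.inl (xe i) : DomIx k m)
      + (px p (xo i) + 2 * pz p * px p (xe i)) • EuclideanSpace.proj (zI k m)
  | Sum.inr (Sum.inr (Sum.inl _)) =>
      pz p • EuclideanSpace.proj (yI k m)
      + (py p + 3 * (pz p)^2) • EuclideanSpace.proj (zI k m)
  | Sum.inr (Sum.inr (Sum.inr j)) =>
      EuclideanSpace.proj (Sum.inr (Sum.inr (Sum.inr j)) : DomIx k m)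

def Lp (p : Dom k m) : Dom k m →L[ℝ] Cod k m :=
  ((EuclideanSpace.equiv (CodIx k m) ℝ).symm : (CodIx k m → ℝ) →L[ℝ] Cod k m).comp
    (ContinuousLinearMap.pi (coordL p))

theorem hasFDerivAt_cuspF (p : Dom k m) : HasFDerivAt (cuspF k m) (Lp p) p := by
  have : cuspF k m = ⇑(EuclideanSpace.equiv (CodIx k m) ℝ).symm ∘
      (fun (p : Dom k m) (q : CodIx k m) =>
        match q with
        | Sum.inl j => if h : j.1 < 2*k then px p ⟨j.1, h⟩ else py p
        | Sum.inr (Sum.inl i) => pz p * px p (xo i) + (pz p)^2 * px p (xe i)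
        | Sum.inr (Sum.inr (Sum.inl _)) => pz p * py p + (pz p)^3
        | Sum.inr (Sum.inr (Sum.inr j)) => ps p j) := rfl
  rw [this, Lp]
  rw [ContinuousLinearEquiv.comp_hasFDerivAt_iff]
  rw [hasFDerivAt_pi']
  intro q
  rw [ContinuousLinearMap.proj_pi]
  have hz : HasFDerivAt (𝕜 := ℝ) (fun p : Dom k m => pz p) (EuclideanSpace.proj (zI k m)) p := by
    exact (EuclideanSpace.proj (zI k m) : Dom k m →L[ℝ] ℝ).hasFDerivAt
  have hy : HasFDerivAt (𝕜 := ℝ) (fun p : Dom k m => py p) (EuclideanSpace.proj (yI k m)) p := by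
    exact (EuclideanSpace.proj (yI k m) : Dom k m →L[ℝ] ℝ).hasFDerivAt
  have hx : ∀ j : Fin (2*k), HasFDerivAt (𝕜 := ℝ) (fun p : Dom k m => px p j)
      (EuclideanSpace.proj (Sum.inl j : DomIx k m)) p := by
    intro j; exact (EuclideanSpace.proj (Sum.inl j : DomIx k m) : Dom k m →L[ℝ] ℝ).hasFDerivAt
  rcases q with j | i | u | j
  · by_cases h : j.1 < 2*k
    · simpa only [coordL, dif_pos h] using hx ⟨j.1, h⟩
    · simpa only [coordL, dif_neg h] using hy
  · simp only [pow_two]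
    have h := ((hz.mul (hx (xo i))).add ((hz.mul hz).mul (hx (xe i))))
    convert h using 1
    · rfl
    ext v
    simp only [coordL, ContinuousLinearMap.add_apply, ContinuousLinearMap.coe_smul',
      Pi.smul_apply, smul_eq_mul, PiLp.proj_apply, Pi.mul_apply]
    ring_nf
  · simp only [pow_three]
    have h := ((hz.mul hy).add (hz.mul (hz.mul hz)))
    convert h using 1
    · rfl
    ext v
    simp only [coordL, ContinuousLinearMap.add_apply, ContinuousLinearMap.coe_smul',
      Pi.smul_apply, smul_eq_mul, PiLp.proj_apply, Pi.mul_apply]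
    ring_nf
  · exact (EuclideanSpace.proj (Sum.inr (Sum.inr (Sum.inr j)) : DomIx k m) : Dom k m →L[ℝ] ℝ).hasFDerivAt

theorem diffAt_sigmaF (p : Dom k m) : DifferentiableAt ℝ (sigmaF k m) p := by
  have : sigmaF k m = ⇑(EuclideanSpace.equiv (CodIx k m) ℝ).symm ∘
      (fun (p : Dom k m) (q : CodIx k m) =>
        match q with
        | Sum.inl j =>
            if h : j.1 < 2*k then
              if h2 : j.1 % 2 = 0 then
                -2 * pz p * px p ⟨j.1+1, by omega⟩ / (1 + (pz p)^2 + (pz p)^4)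
              else
                -2 * (pz p)^2 * px p ⟨j.1, h⟩ / (1 + (pz p)^2 + (pz p)^4)
            else -6 * (pz p)^2 / (1 + (pz p)^2)
        | Sum.inr (Sum.inl i) => 2 * px p (xe i) / (1 + (pz p)^2 + (pz p)^4)
        | Sum.inr (Sum.inr (Sum.inl _)) => 6 * pz p / (1 + (pz p)^2)
        | Sum.inr (Sum.inr (Sum.inr _)) => 0) := rfl
  rw [this, ContinuousLinearEquiv.comp_differentiableAt_iff, differentiableAt_pi]
  intro q
  have hz : DifferentiableAt ℝ (fun p : Dom k m => pz p) p :=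
    ((EuclideanSpace.proj (zI k m) : Dom k m →L[ℝ] ℝ).hasFDerivAt (x := p)).differentiableAt
  have hx : ∀ j : Fin (2*k), DifferentiableAt ℝ (fun p : Dom k m => px p j) p := fun j =>
    ((EuclideanSpace.proj (Sum.inl j : DomIx k m) : Dom k m →L[ℝ] ℝ).hasFDerivAt (x := p)).differentiableAt
  have hD : (1 + (pz p)^2 + (pz p)^4) ≠ 0 := by positivity
  have hE : (1 + (pz p)^2) ≠ 0 := by positivity
  have hDd : DifferentiableAt ℝ (fun p : Dom k m => 1 + (pz p)^2 + (pz p)^4) p :=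
    ((differentiableAt_const _).add (hz.pow 2)).add (hz.pow 4)
  have hEd : DifferentiableAt ℝ (fun p : Dom k m => 1 + (pz p)^2) p :=
    (differentiableAt_const _).add (hz.pow 2)
  rcases q with j | i | u | j
  · by_cases h : j.1 < 2*k
    · by_cases h2 : j.1 % 2 = 0
      · simp only [dif_pos h, dif_pos h2, div_eq_mul_inv]
        exact (((differentiableAt_const _).mul hz).mul (hx _)).mul (hDd.inv hD)
      · simp only [dif_pos h, dif_neg h2, div_eq_mul_inv]
        exact (((differentiableAt_const _).mul (hz.pow 2)).mul (hx _)).mul (hDd.inv hD)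
    · simp only [dif_neg h, div_eq_mul_inv]
      exact ((differentiableAt_const _).mul (hz.pow 2)).mul (hEd.inv hE)
  · simp only [div_eq_mul_inv]
    exact ((differentiableAt_const _).mul (hx _)).mul (hDd.inv hD)
  · simp only [div_eq_mul_inv]
    exact ((differentiableAt_const _).mul hz).mul (hEd.inv hE)
  · exact differentiableAt_const 0

def Dt (p : Dom k m) : (Dom k m × ℝ) →L[ℝ] Cod k m :=
  (Lp p).comp (ContinuousLinearMap.fst ℝ (Dom k m) ℝ)
  + (ContinuousLinearMap.snd ℝ (Dom k m) ℝ).smulRight (sigmaF k m p)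

theorem hasFDerivAt_ftilde (p : Dom k m) : HasFDerivAt (ftilde k m) (Dt p) (p, 0) := by
  have h1 : HasFDerivAt (fun q : Dom k m × ℝ => cuspF k m q.1)
      ((Lp p).comp (ContinuousLinearMap.fst ℝ (Dom k m) ℝ)) (p, 0) :=
    by have := (hasFDerivAt_cuspF p).comp (p, (0:ℝ)) (hasFDerivAt_fst (𝕜 := ℝ) (p := (p, (0:ℝ)))); exact this
  have hσ : HasFDerivAt (fun q : Dom k m × ℝ => sigmaF k m q.1)
      ((fderiv ℝ (sigmaF k m) p).comp (ContinuousLinearMap.fst ℝ (Dom k m) ℝ)) (p, 0) :=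
    by have := ((diffAt_sigmaF p).hasFDerivAt).comp (p, (0:ℝ)) (hasFDerivAt_fst (𝕜 := ℝ) (p := (p, (0:ℝ)))); exact this
  have ht : HasFDerivAt (fun q : Dom k m × ℝ => q.2)
      (ContinuousLinearMap.snd ℝ (Dom k m) ℝ) (p, 0) := hasFDerivAt_snd
  have h2 := ht.smul hσ
  have h3 := h1.add h2
  have : ftilde k m = fun q : Dom k m × ℝ => cuspF k m q.1 + q.2 • sigmaF k m q.1 := rfl
  rw [this]
  exact h3.congr_fderiv (by simp [Dt])

theorem fderiv_ftilde (p : Dom k m) : fderiv ℝ (ftilde k m) (p, 0) = Dt p :=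
  (hasFDerivAt_ftilde p).fderiv

theorem Dt_apply (p : Dom k m) (w : Dom k m × ℝ) (q : CodIx k m) :
    (Dt p w) q = coordL p q w.1 + w.2 * sigmaF k m p q := rfl

theorem mem_ker_iff (p : Dom k m) (w : Dom k m × ℝ) :
    w ∈ LinearMap.ker (fderiv ℝ (ftilde k m) (p, 0) : Dom k m × ℝ →ₗ[ℝ] Cod k m) ↔
      ∀ q : CodIx k m, coordL p q w.1 + w.2 * sigmaF k m p q = 0 := by
  rw [fderiv_ftilde, LinearMap.mem_ker]
  constructor
  · intro h q
    have := congrArg (fun v : Cod k m => v q) h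
    simpa [Dt_apply] using this
  · intro h
    ext q
    simpa [Dt_apply] using h q

theorem coordL_inl_lt (p : Dom k m) (j : Fin (2*k+1)) (h : j.1 < 2*k) :
    coordL p (Sum.inl j) = EuclideanSpace.proj (Sum.inl ⟨j.1, h⟩ : DomIx k m) := dif_pos h

theorem coordL_inl_ge (p : Dom k m) (j : Fin (2*k+1)) (h : ¬ j.1 < 2*k) :
    coordL p (Sum.inl j) = EuclideanSpace.proj (yI k m) := dif_neg h

theorem sigmaF_inl_def (p : Dom k m) (j : Fin (2*k+1)) :
    sigmaF k m p (Sum.inl j) =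
      if h : j.1 < 2*k then
        if h2 : j.1 % 2 = 0 then
          -2 * pz p * px p ⟨j.1+1, by omega⟩ / (1 + (pz p)^2 + (pz p)^4)
        else
          -2 * (pz p)^2 * px p ⟨j.1, h⟩ / (1 + (pz p)^2 + (pz p)^4)
      else -6 * (pz p)^2 / (1 + (pz p)^2) := rfl

theorem sigmaF_inl_even (p : Dom k m) (j : Fin (2*k+1)) (h : j.1 < 2*k) (h2 : j.1 % 2 = 0) :
    sigmaF k m p (Sum.inl j) =
      -2 * pz p * px p ⟨j.1+1, by omega⟩ / (1 + (pz p)^2 + (pz p)^4) := by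
  rw [sigmaF_inl_def, dif_pos h, dif_pos h2]

theorem sigmaF_inl_odd (p : Dom k m) (j : Fin (2*k+1)) (h : j.1 < 2*k) (h2 : ¬ j.1 % 2 = 0) :
    sigmaF k m p (Sum.inl j) =
      -2 * (pz p)^2 * px p ⟨j.1, h⟩ / (1 + (pz p)^2 + (pz p)^4) := by
  rw [sigmaF_inl_def, dif_pos h, dif_neg h2]

theorem sigmaF_inl_last (p : Dom k m) (j : Fin (2*k+1)) (h : ¬ j.1 < 2*k) :
    sigmaF k m p (Sum.inl j) = -6 * (pz p)^2 / (1 + (pz p)^2) := by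
  rw [sigmaF_inl_def, dif_neg h]

-- scalar coordinate equations for kernel elements
section eqns
variable {p : Dom k m} {w : Dom k m × ℝ}
  (hw : ∀ q : CodIx k m, coordL p q w.1 + w.2 * sigmaF k m p q = 0)

include hw

theorem eq_Xeven (i : Fin k) :
    w.1 (Sum.inl (xo i)) +
      w.2 * (-2 * pz p * px p (xe i) / (1 + (pz p)^2 + (pz p)^4)) = 0 := by
  have hlt : (2*i.1) < 2*k := by have := i.isLt; omega
  have h := hw (Sum.inl ⟨2*i.1, by omega⟩)
  rw [coordL_inl_lt p _ hlt, sigmaF_inl_even p _ hlt (show (2*i.1) % 2 = 0 by omega)] at h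
  exact h

theorem eq_Xodd (i : Fin k) :
    w.1 (Sum.inl (xe i)) +
      w.2 * (-2 * (pz p)^2 * px p (xe i) / (1 + (pz p)^2 + (pz p)^4)) = 0 := by
  have hlt : (2*i.1+1) < 2*k := by have := i.isLt; omega
  have h := hw (Sum.inl ⟨2*i.1+1, by omega⟩)
  rw [coordL_inl_lt p _ hlt, sigmaF_inl_odd p _ hlt (show ¬ (2*i.1+1) % 2 = 0 by omega)] at h
  exact h

theorem eq_Xlast :
    w.1 (yI k m) + w.2 * (-6 * (pz p)^2 / (1 + (pz p)^2)) = 0 := by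
  have h := hw (Sum.inl ⟨2*k, by omega⟩)
  rw [coordL_inl_ge p _ (show ¬ 2*k < 2*k by omega), sigmaF_inl_last p _ (show ¬ 2*k < 2*k by omega)] at h
  exact h

theorem eq_Y (i : Fin k) :
    pz p * w.1 (Sum.inl (xo i)) + (pz p)^2 * w.1 (Sum.inl (xe i))
      + (px p (xo i) + 2 * pz p * px p (xe i)) * w.1 (zI k m)
      + w.2 * (2 * px p (xe i) / (1 + (pz p)^2 + (pz p)^4)) = 0 := by
  have h := hw (Sum.inr (Sum.inl i))
  exact h

theorem eq_Z :
    pz p * w.1 (yI k m) + (py p + 3 * (pz p)^2) * w.1 (zI k m)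
      + w.2 * (6 * pz p / (1 + (pz p)^2)) = 0 := by
  have h := hw (Sum.inr (Sum.inr (Sum.inl ())))
  exact h

theorem eq_S (j : Fin m) : w.1 (Sum.inr (Sum.inr (Sum.inr j))) = 0 := by
  have h : w.1 (Sum.inr (Sum.inr (Sum.inr j))) + w.2 * 0 = 0 := hw (Sum.inr (Sum.inr (Sum.inr j)))
  simpa using h

end eqns

theorem constraint1 (p : Dom k m) (w : Dom k m × ℝ)
    (hw : w ∈ LinearMap.ker (fderiv ℝ (ftilde k m) (p, 0) : Dom k m × ℝ →ₗ[ℝ] Cod k m)) (i : Fin k) :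
    2 * px p (xe i) * w.2 + (px p (xo i) + 2 * pz p * px p (xe i)) * w.1 (zI k m) = 0 := by
  rw [mem_ker_iff] at hw
  have hD : (1 + (pz p)^2 + (pz p)^4) ≠ 0 := by positivity
  have h1 := eq_Xeven hw i
  have h2 := eq_Xodd hw i
  have h3 := eq_Y hw i
  have key : 2 * px p (xe i) * w.2 + (px p (xo i) + 2 * pz p * px p (xe i)) * w.1 (zI k m)
      = (pz p * w.1 (Sum.inl (xo i)) + (pz p)^2 * w.1 (Sum.inl (xe i))
          + (px p (xo i) + 2 * pz p * px p (xe i)) * w.1 (zI k m)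
          + w.2 * (2 * px p (xe i) / (1 + (pz p)^2 + (pz p)^4)))
        - pz p * (w.1 (Sum.inl (xo i)) +
            w.2 * (-2 * pz p * px p (xe i) / (1 + (pz p)^2 + (pz p)^4)))
        - (pz p)^2 * (w.1 (Sum.inl (xe i)) +
            w.2 * (-2 * (pz p)^2 * px p (xe i) / (1 + (pz p)^2 + (pz p)^4))) := by
    field_simp
    ring
  rw [key, h1, h2, h3]
  ring

theorem constraint2 (p : Dom k m) (w : Dom k m × ℝ)
    (hw : w ∈ LinearMap.ker (fderiv ℝ (ftilde k m) (p, 0) : Dom k m × ℝ →ₗ[ℝ] Cod k m)) :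
    6 * pz p * w.2 + (py p + 3 * (pz p)^2) * w.1 (zI k m) = 0 := by
  rw [mem_ker_iff] at hw
  have hE : (1 + (pz p)^2) ≠ 0 := by positivity
  have h4 := eq_Z hw
  have h5 := eq_Xlast hw
  have key : 6 * pz p * w.2 + (py p + 3 * (pz p)^2) * w.1 (zI k m)
      = (pz p * w.1 (yI k m) + (py p + 3 * (pz p)^2) * w.1 (zI k m)
          + w.2 * (6 * pz p / (1 + (pz p)^2)))
        - pz p * (w.1 (yI k m) + w.2 * (-6 * (pz p)^2 / (1 + (pz p)^2))) := by
    field_simp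
    ring
  rw [key, h4, h5]
  ring

theorem vanish (p : Dom k m) (w : Dom k m × ℝ)
    (hw : w ∈ LinearMap.ker (fderiv ℝ (ftilde k m) (p, 0) : Dom k m × ℝ →ₗ[ℝ] Cod k m))
    (ht : w.2 = 0) (hz : w.1 (zI k m) = 0) : w = 0 := by
  rw [mem_ker_iff] at hw
  have hw' : ∀ q : CodIx k m, coordL p q w.1 = 0 := by
    intro q
    have := hw q
    rw [ht] at this
    simpa using this
  have hw'' : ∀ q : CodIx k m, coordL p q w.1 + w.2 * sigmaF k m p q = 0 := by
    intro q; rw [ht, hw' q]; ring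
  have hX : ∀ j : Fin (2*k), w.1 (Sum.inl j) = 0 := by
    intro j
    rcases Nat.even_or_odd j.1 with he | ho
    · have hj : j = xo ⟨j.1/2, by have := j.isLt; omega⟩ := by
        apply Fin.ext
        show j.1 = 2*(j.1/2)
        have := Nat.even_iff.mp he
        omega
      rw [hj]
      have := eq_Xeven hw'' ⟨j.1/2, by have := j.isLt; omega⟩
      rw [ht] at this
      simpa using this
    · have hj : j = xe ⟨j.1/2, by have := j.isLt; omega⟩ := by
        apply Fin.ext
        show j.1 = 2*(j.1/2)+1
        have := Nat.odd_iff.mp ho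
        omega
      rw [hj]
      have := eq_Xodd hw'' ⟨j.1/2, by have := j.isLt; omega⟩
      rw [ht] at this
      simpa using this
  have hY : w.1 (yI k m) = 0 := by
    have := eq_Xlast hw''
    rw [ht] at this
    simpa using this
  have hS := fun j => eq_S hw'' j
  have h1 : w.1 = 0 := by
    ext idx
    rcases idx with j | u | u | j
    · simpa using hX j
    · cases u; simpa using hY
    · cases u; simpa using hz
    · simpa using hS j
  exact Prod.ext h1 ht

section case1
variable {p : Dom k m} (hx0 : ∀ j : Fin (2*k), px p j = 0) (hy0 : py p = 0) (hz0 : pz p = 0)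
include hx0 hy0 hz0

theorem sigmaF_zero : sigmaF k m p = 0 := by
  ext q
  rcases q with j | i | u | j
  · rw [sigmaF_inl_def]
    split_ifs <;> simp [hx0, hz0]
  · show 2 * px p (xe i) / (1 + (pz p)^2 + (pz p)^4) = (0 : Cod k m) (Sum.inr (Sum.inl i))
    simp [hx0]
  · show 6 * pz p / (1 + (pz p)^2) = (0 : Cod k m) (Sum.inr (Sum.inr (Sum.inl u)))
    simp [hz0]
  · rfl

theorem ker_case1 :
    LinearMap.ker (fderiv ℝ (ftilde k m) (p, 0) : Dom k m × ℝ →ₗ[ℝ] Cod k m) =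
      Submodule.span ℝ {((ez k m, 0) : Dom k m × ℝ), ((0, 1) : Dom k m × ℝ)} := by
  have hσ := sigmaF_zero hx0 hy0 hz0
  apply le_antisymm
  · intro w hw
    rw [mem_ker_iff] at hw
    have hw' : ∀ q : CodIx k m, coordL p q w.1 = 0 := by
      intro q
      have := hw q
      rw [hσ] at this
      simpa using this
    have hw'' : ∀ q : CodIx k m, coordL p q w.1 + 0 * sigmaF k m p q = 0 := by
      intro q; rw [hσ]; simpa using hw' q
    have hX : ∀ j : Fin (2*k), w.1 (Sum.inl j) = 0 := by
      intro j
      have hlt : j.1 < 2*k := j.2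
      have h := hw' (Sum.inl ⟨j.1, by omega⟩)
      rw [coordL_inl_lt p _ hlt] at h
      simpa using h
    have hY : w.1 (yI k m) = 0 := by
      have h := hw' (Sum.inl ⟨2*k, by omega⟩)
      rw [coordL_inl_ge p _ (show ¬ 2*k < 2*k by omega)] at h
      simpa using h
    have hS : ∀ j : Fin m, w.1 (Sum.inr (Sum.inr (Sum.inr j))) = 0 := by
      intro j
      exact hw' (Sum.inr (Sum.inr (Sum.inr j)))
    have hdec : w = w.1 (zI k m) • ((ez k m, 0) : Dom k m × ℝ) + w.2 • ((0, 1) : Dom k m × ℝ) := by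
      rw [Prod.ext_iff]
      constructor
      · show w.1 = w.1 (zI k m) • ez k m + w.2 • (0 : Dom k m)
        ext idx
        rcases idx with j | u | u | j
        · simp [ez, EuclideanSpace.single_apply, hX j]
        · cases u; simpa [ez, EuclideanSpace.single_apply] using hY
        · cases u; simp [ez, EuclideanSpace.single_apply]
        · simp [ez, EuclideanSpace.single_apply, hS j]
      · show w.2 = w.1 (zI k m) • (0:ℝ) + w.2 • (1:ℝ)
        simp
    rw [hdec]
    exact Submodule.add_mem _
      (Submodule.smul_mem _ _ (Submodule.subset_span (by simp)))
      (Submodule.smul_mem _ _ (Submodule.subset_span (by simp)))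
  · rw [Submodule.span_le]
    intro w hw
    simp only [Set.mem_insert_iff, Set.mem_singleton_iff] at hw
    rcases hw with rfl | rfl
    · rw [SetLike.mem_coe, mem_ker_iff]
      intro q
      rcases q with j | i | u | j
      · show coordL p (Sum.inl j) (ez k m) + (0:ℝ) * sigmaF k m p (Sum.inl j) = 0
        by_cases h : j.1 < 2*k
        · rw [coordL_inl_lt p _ h]
          simp [ez, EuclideanSpace.single_apply]
        · rw [coordL_inl_ge p _ h]
          simp [ez, EuclideanSpace.single_apply]
      · show pz p * (ez k m) (Sum.inl (xo i)) + (pz p)^2 * (ez k m) (Sum.inl (xe i))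
            + (px p (xo i) + 2 * pz p * px p (xe i)) * (ez k m) (zI k m)
            + (0:ℝ) * sigmaF k m p (Sum.inr (Sum.inl i)) = 0
        simp [ez, EuclideanSpace.single_apply, hx0, hz0]
      · show pz p * (ez k m) (yI k m) + (py p + 3 * (pz p)^2) * (ez k m) (zI k m)
            + (0:ℝ) * sigmaF k m p (Sum.inr (Sum.inr (Sum.inl u))) = 0
        simp [ez, EuclideanSpace.single_apply, hy0, hz0]
      · show (ez k m) (Sum.inr (Sum.inr (Sum.inr j))) + (0:ℝ) * sigmaF k m p (Sum.inr (Sum.inr (Sum.inr j))) = 0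
        simp [ez, EuclideanSpace.single_apply]
    · rw [SetLike.mem_coe, mem_ker_iff]
      intro q
      show coordL p q (0 : Dom k m) + (1:ℝ) * sigmaF k m p q = 0
      rw [hσ]
      simp

end case1

theorem linIndep_pair :
    LinearIndependent ℝ ![((ez k m, 0) : Dom k m × ℝ), ((0, 1) : Dom k m × ℝ)] := by
  rw [LinearIndependent.pair_iff]
  intro s t hst
  have h2 : t = 0 := by
    have := congrArg Prod.snd hst
    simpa using this
  have h1 : s = 0 := by
    have := congrArg (fun w : Dom k m × ℝ => w.1 (zI k m)) hst
    simpa [ez, EuclideanSpace.single_apply] using this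
  exact ⟨h1, h2⟩

end S6

theorem statement6 (k m : ℕ) (hk : 1 ≤ k) (p : Dom k m) :
    (((∀ j : Fin (2*k), px p j = 0) ∧ py p = 0 ∧ pz p = 0) →
      LinearMap.ker (fderiv ℝ (ftilde k m) (p, 0) : Dom k m × ℝ →ₗ[ℝ] Cod k m) =
        Submodule.span ℝ {((ez k m, 0) : Dom k m × ℝ), ((0, 1) : Dom k m × ℝ)} ∧
      Module.finrank ℝ (LinearMap.ker (fderiv ℝ (ftilde k m) (p, 0) : Dom k m × ℝ →ₗ[ℝ] Cod k m)) = 2) ∧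
    (¬((∀ j : Fin (2*k), px p j = 0) ∧ py p = 0 ∧ pz p = 0) →
      Module.finrank ℝ (LinearMap.ker (fderiv ℝ (ftilde k m) (p, 0) : Dom k m × ℝ →ₗ[ℝ] Cod k m)) ≤ 1) := by
  constructor
  · rintro ⟨hx0, hy0, hz0⟩
    have hker := S6.ker_case1 (p := p) hx0 hy0 hz0
    refine ⟨hker, ?_⟩
    rw [hker]
    have hset : ({((ez k m, 0) : Dom k m × ℝ), ((0, 1) : Dom k m × ℝ)} : Set (Dom k m × ℝ))
        = Set.range ![((ez k m, 0) : Dom k m × ℝ), ((0, 1) : Dom k m × ℝ)] := by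
      ext w
      simp only [Set.mem_insert_iff, Set.mem_singleton_iff, Matrix.range_cons,
        Matrix.range_empty, Set.union_empty, Set.union_singleton, Set.mem_union]
      tauto
    rw [hset, finrank_span_eq_card S6.linIndep_pair]
    simp
  · intro hne
    obtain ⟨c₁, c₂, hc, hcon⟩ : ∃ c₁ c₂ : ℝ, ¬(c₁ = 0 ∧ c₂ = 0) ∧
        ∀ w ∈ LinearMap.ker (fderiv ℝ (ftilde k m) (p, 0) : Dom k m × ℝ →ₗ[ℝ] Cod k m),
          c₁ * w.1 (S6.zI k m) + c₂ * w.2 = 0 := by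
      by_cases hz0 : pz p = 0
      · by_cases hy0 : py p = 0
        · have hxne : ¬ ∀ j : Fin (2*k), px p j = 0 := fun hx => hne ⟨hx, hy0, hz0⟩
          push_neg at hxne
          obtain ⟨j, hj⟩ := hxne
          have hik : j.1/2 < k := by have := j.isLt; omega
          refine ⟨px p (xo ⟨j.1/2, hik⟩) + 2 * pz p * px p (xe ⟨j.1/2, hik⟩),
            2 * px p (xe ⟨j.1/2, hik⟩), ?_, ?_⟩
          · rintro ⟨hA, hB⟩
            have hxe : px p (xe ⟨j.1/2, hik⟩) = 0 := by linarith
            rw [hz0, hxe] at hA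
            have hxo : px p (xo ⟨j.1/2, hik⟩) = 0 := by linarith
            have : j = xo ⟨j.1/2, hik⟩ ∨ j = xe ⟨j.1/2, hik⟩ := by
              rcases Nat.even_or_odd j.1 with he | ho
              · left; apply Fin.ext; show j.1 = 2*(j.1/2)
                have := Nat.even_iff.mp he; omega
              · right; apply Fin.ext; show j.1 = 2*(j.1/2)+1
                have := Nat.odd_iff.mp ho; omega
            rcases this with h | h
            · rw [h] at hj; exact hj hxo
            · rw [h] at hj; exact hj hxe
          · intro w hw
            have := S6.constraint1 p w hw ⟨j.1/2, hik⟩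
            linear_combination this
        · refine ⟨py p + 3 * (pz p)^2, 6 * pz p, ?_, ?_⟩
          · rintro ⟨hA, hB⟩
            apply hy0
            rw [hz0] at hA
            linarith [hA]
          · intro w hw
            linear_combination S6.constraint2 p w hw
      · refine ⟨py p + 3 * (pz p)^2, 6 * pz p, ?_, ?_⟩
        · rintro ⟨hA, hB⟩
          apply hz0
          linarith
        · intro w hw
          linear_combination S6.constraint2 p w hw
    set ψ : (ℝ × ℝ) →ₗ[ℝ] ℝ := c₁ • LinearMap.fst ℝ ℝ ℝ + c₂ • LinearMap.snd ℝ ℝ ℝ with hψ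
    have hψap : ∀ u : ℝ × ℝ, ψ u = c₁ * u.1 + c₂ * u.2 := fun u => rfl
    have hsurj : Function.Surjective ψ := by
      intro a
      rcases not_and_or.mp hc with h | h
      · refine ⟨(a / c₁, 0), ?_⟩
        rw [hψap]
        field_simp
        simp
      · refine ⟨(0, a / c₂), ?_⟩
        rw [hψap]
        field_simp
        simp
    have hrank : Module.finrank ℝ ↥(LinearMap.ker ψ) ≤ 1 := by
      have h1 := LinearMap.finrank_range_add_finrank_ker ψ
      rw [LinearMap.range_eq_top.mpr hsurj] at h1
      have h2 : Module.finrank ℝ (ℝ × ℝ) = 2 := by simp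
      have h3 : Module.finrank ℝ (⊤ : Submodule ℝ ℝ) = 1 := by simp
      omega
    set Φ : (Dom k m × ℝ) →ₗ[ℝ] ℝ × ℝ :=
      LinearMap.prod
        ((EuclideanSpace.projₗ (S6.zI k m)).comp (LinearMap.fst ℝ (Dom k m) ℝ))
        (LinearMap.snd ℝ (Dom k m) ℝ) with hΦdef
    have hΦ : ∀ w : Dom k m × ℝ, Φ w = (w.1 (S6.zI k m), w.2) := fun w => rfl
    have hKψ : ∀ u : ↥(LinearMap.ker (fderiv ℝ (ftilde k m) (p, 0) : Dom k m × ℝ →ₗ[ℝ] Cod k m)),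
        Φ (u : Dom k m × ℝ) ∈ LinearMap.ker ψ := by
      intro u
      rw [LinearMap.mem_ker, hψap, hΦ]
      exact hcon u u.2
    set Θ : ↥(LinearMap.ker (fderiv ℝ (ftilde k m) (p, 0) : Dom k m × ℝ →ₗ[ℝ] Cod k m)) →ₗ[ℝ] ↥(LinearMap.ker ψ) :=
      LinearMap.codRestrict _ (Φ.comp (LinearMap.ker (fderiv ℝ (ftilde k m) (p, 0) : Dom k m × ℝ →ₗ[ℝ] Cod k m)).subtype)
        (fun u => hKψ u) with hΘ
    have hker0 : ∀ u, Θ u = 0 → u = 0 := by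
      intro u hu
      have h1 : Φ (u : Dom k m × ℝ) = 0 := congrArg Subtype.val hu
      rw [hΦ] at h1
      have hz1 : (u : Dom k m × ℝ).1 (S6.zI k m) = 0 := congrArg Prod.fst h1
      have ht1 : (u : Dom k m × ℝ).2 = 0 := congrArg Prod.snd h1
      exact Subtype.ext (S6.vanish p _ u.2 ht1 hz1)
    have hinj : Function.Injective Θ :=
      LinearMap.ker_eq_bot.mp (LinearMap.ker_eq_bot'.mpr hker0)
    exact le_trans (LinearMap.finrank_le_finrank_of_injective hinj) hrank
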